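/- arXiv:1401.5502 — 4 statements merged into one kernel-verified Lean document; each statement's English description precedes it below -/
import Mathlib

section
/- Fix real numbers τ, T, t, x with t ≤ T < τ and T − t < τ − T, and define the heat kernel f_τ(x, s) = (τ − s)^{−1/2} · exp(−x²/(2(τ − s))) for s < τ. Then the Taylor series of s ↦ f_τ(x, s) around s = T, evaluated at t, converges absolutely and equals f_τ(x, t); that is, f_τ(x, t) = ∑_{i=0}^{∞} ((t − T)^i / i!) · (∂^i/∂s^i) f_τ(x, s)|_{s=T}. -/
open Complex in
lemma aux_iteratedDeriv_comp_ofReal (n : ℕ) : ∀ {g : ℂ → ℂ} {U : Set ℂ}, IsOpen U →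
    (∀ z ∈ U, DifferentiableAt ℂ g z) → ∀ {s : ℝ}, (s : ℂ) ∈ U →
    iteratedDeriv n (fun y : ℝ => g y) s = iteratedDeriv n g s := by
  induction n with
  | zero => intro g U _ _ s _; simp
  | succ n ih =>
    intro g U hU hg s hs
    have hUopen : IsOpen (Complex.ofReal ⁻¹' U) := hU.preimage Complex.continuous_ofReal
    have h1 : (fun y : ℝ => deriv g y) =ᶠ[nhds s] deriv (fun y : ℝ => g y) := by
      filter_upwards [hUopen.mem_nhds hs] with y hy
      exact (((hg _ hy).hasDerivAt).comp_ofReal).deriv.symm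
    have hganal : ∀ z ∈ U, DifferentiableAt ℂ (deriv g) z := by
      intro z hz
      have hDO : DifferentiableOn ℂ g U := fun z hz => (hg z hz).differentiableWithinAt
      exact (((hDO.analyticOnNhd hU).deriv) z hz).differentiableAt
    rw [iteratedDeriv_succ', iteratedDeriv_succ',
      ← h1.iteratedDeriv_eq n, ih hU hganal hs]

lemma aux_iteratedDeriv_ofReal_comp (n : ℕ) : ∀ (f : ℝ → ℝ) (s : ℝ),
    iteratedDeriv n (fun y : ℝ => (f y : ℂ)) s = Complex.ofReal (iteratedDeriv n f s) := by
  induction n with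
  | zero => intro f s; simp
  | succ n ih =>
    intro f s
    have key : deriv (fun y : ℝ => (f y : ℂ)) = fun y : ℝ => ((deriv f y : ℝ) : ℂ) := by
      funext y
      by_cases h : DifferentiableAt ℝ f y
      · exact (h.hasDerivAt.ofReal_comp).deriv
      · have h2 : ¬ DifferentiableAt ℝ (fun y : ℝ => (f y : ℂ)) y := by
          intro h2
          exact h ((Complex.reCLM.differentiableAt.comp y h2).congr_of_eventuallyEq
            (Filter.Eventually.of_forall fun _ => by simp))
        rw [deriv_zero_of_not_differentiableAt h, deriv_zero_of_not_differentiableAt h2]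
        simp
    rw [iteratedDeriv_succ', key, ih, iteratedDeriv_succ']
set_option maxHeartbeats 2000000 in
/-- For the heat kernel `f_τ(x, s) = (τ - s)^{-1/2} exp(-x²/(2(τ - s)))` with `t ≤ T < τ` and
`T - t < τ - T`, the Taylor series in the time variable around `s = T`, evaluated at `t`,
converges absolutely and sums to `f_τ(x, t)`. -/
theorem heatKernel_taylor_series (τ T t x : ℝ) (htT : t ≤ T) (hTτ : T < τ)
    (hclose : T - t < τ - T) :
    Summable (fun i : ℕ => |(t - T) ^ i / (Nat.factorial i : ℝ) *
      iteratedDeriv i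
        (fun s => (τ - s) ^ (-(1 : ℝ) / 2) * Real.exp (-x ^ 2 / (2 * (τ - s)))) T|) ∧
    HasSum (fun i : ℕ => (t - T) ^ i / (Nat.factorial i : ℝ) *
      iteratedDeriv i
        (fun s => (τ - s) ^ (-(1 : ℝ) / 2) * Real.exp (-x ^ 2 / (2 * (τ - s)))) T)
      ((τ - t) ^ (-(1 : ℝ) / 2) * Real.exp (-x ^ 2 / (2 * (τ - t)))) := by
  set fR : ℝ → ℝ := fun s => (τ - s) ^ (-(1 : ℝ) / 2) * Real.exp (-x ^ 2 / (2 * (τ - s)))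
    with hfR
  set g : ℂ → ℂ := fun z => ((τ : ℂ) - z) ^ (-(1 : ℂ) / 2) *
    Complex.exp (-(x : ℂ) ^ 2 / (2 * ((τ : ℂ) - z))) with hg
  set U : Set ℂ := Complex.re ⁻¹' Set.Iio τ with hU
  have hUopen : IsOpen U := isOpen_Iio.preimage Complex.continuous_re
  -- differentiability of g on U
  have hgd : ∀ z ∈ U, DifferentiableAt ℂ g z := by
    intro z hz
    have hre : 0 < ((τ : ℂ) - z).re := by
      simpa [sub_pos] using (show z.re < τ by simpa [hU] using hz)
    have hne : (2 : ℂ) * ((τ : ℂ) - z) ≠ 0 := by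
      intro h
      rcases mul_eq_zero.mp h with h | h
      · norm_num at h
      · rw [h] at hre; simp at hre
    have hbase : DifferentiableAt ℂ (fun z : ℂ => (τ : ℂ) - z) z :=
      (differentiableAt_const _).sub differentiableAt_id
    apply DifferentiableAt.mul
    · exact (hbase.hasDerivAt.cpow_const (Or.inl hre)).differentiableAt
    · exact Complex.differentiableAt_exp.comp z
        ((differentiableAt_const _).div ((differentiableAt_const _).mul hbase) hne)
  -- g agrees with fR on reals < τ
  have hfg : ∀ s : ℝ, s < τ → (fR s : ℂ) = g s := by
    intro s hs
    have h1 : (0 : ℝ) ≤ τ - s := by linarith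
    have : ((τ : ℂ) - (s : ℂ)) = ((τ - s : ℝ) : ℂ) := by push_cast; ring
    rw [hfR, hg]
    simp only [this]
    rw [Complex.ofReal_mul, Complex.ofReal_cpow h1, Complex.ofReal_exp]
    congr 1
    · norm_num
    · congr 1
      push_cast
      ring
  -- iterated derivatives agree
  have hiter : ∀ n : ℕ, iteratedDeriv n g (T : ℂ) = Complex.ofReal (iteratedDeriv n fR T) := by
    intro n
    have h1 : iteratedDeriv n g (T : ℂ) = iteratedDeriv n (fun y : ℝ => g y) T :=
      (aux_iteratedDeriv_comp_ofReal n hUopen hgd (by simpa [hU] using hTτ)).symm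
    have h2 : iteratedDeriv n (fun y : ℝ => g y) T
        = iteratedDeriv n (fun y : ℝ => (fR y : ℂ)) T := by
      have heq : Set.EqOn (fun y : ℝ => g y) (fun y : ℝ => (fR y : ℂ)) (Set.Iio τ) :=
        fun y hy => (hfg y hy).symm
      exact (heq.iteratedDeriv_of_isOpen isOpen_Iio n) hTτ
    rw [h1, h2, aux_iteratedDeriv_ofReal_comp]
  -- HasSum for the complex Taylor series on the ball
  have hball : Metric.ball (T : ℂ) (τ - T) ⊆ U := by
    intro z hz
    have h1 : ‖z - T‖ < τ - T := by
      simpa [Complex.dist_eq] using hz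
    have h2 : (z - T).re ≤ ‖z - T‖ := Complex.re_le_norm _
    simp only [hU, Set.mem_preimage, Set.mem_Iio]
    have : (z - T).re = z.re - T := by simp
    linarith
  have hgdiff : DifferentiableOn ℂ g (Metric.ball (T : ℂ) (τ - T)) :=
    fun z hz => (hgd z (hball hz)).differentiableWithinAt
  have hmem : ∀ y : ℝ, |y - T| < τ - T → (y : ℂ) ∈ Metric.ball (T : ℂ) (τ - T) := by
    intro y hy
    rw [Metric.mem_ball, Complex.dist_eq]
    calc ‖(y : ℂ) - T‖ = |y - T| := by
          rw [← Complex.ofReal_sub, Complex.norm_real, Real.norm_eq_abs]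
      _ < τ - T := hy
  have hHS : ∀ y : ℝ, |y - T| < τ - T →
      HasSum (fun n : ℕ => (y - T) ^ n / (Nat.factorial n : ℝ) * iteratedDeriv n fR T)
        (fR y) := by
    intro y hy
    have hyτ : y < τ := by
      have := abs_lt.mp hy
      linarith [this.1, this.2]
    have H := Complex.hasSum_taylorSeries_on_ball hgdiff (hmem y hy)
    rw [← hfg y hyτ] at H
    rw [← Complex.hasSum_ofReal]
    convert! H using 2 with n
    rw [hiter n, smul_eq_mul, smul_eq_mul]
    push_cast
    ring
  have habs : |t - T| < τ - T := by
    rw [abs_of_nonpos (by linarith)]; linarith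
  refine ⟨?_, hHS t habs⟩
  -- Summability of absolute values via a slightly larger radius
  set r : ℝ := ((T - t) + (τ - T)) / 2 with hr
  have hr0 : 0 < r := by rw [hr]; linarith
  have hrlt : T - t < r := by rw [hr]; linarith
  have hrτ : r < τ - T := by rw [hr]; linarith
  have habs' : |(T - r) - T| < τ - T := by
    rw [show (T - r) - T = -r by ring, abs_neg, abs_of_pos hr0]; exact hrτ
  have H' := (hHS (T - r) habs').summable
  have htend : Filter.Tendsto
      (fun n : ℕ => |((T - r) - T) ^ n / (Nat.factorial n : ℝ) * iteratedDeriv n fR T|)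
      Filter.atTop (nhds 0) := by
    simpa using H'.tendsto_atTop_zero.abs
  obtain ⟨C, hC⟩ := htend.bddAbove_range
  have hCle : ∀ n : ℕ, r ^ n / (Nat.factorial n : ℝ) * |iteratedDeriv n fR T| ≤ C := by
    intro n
    have := hC (Set.mem_range_self n)
    calc r ^ n / (Nat.factorial n : ℝ) * |iteratedDeriv n fR T|
        = |((T - r) - T) ^ n / (Nat.factorial n : ℝ) * iteratedDeriv n fR T| := by
          rw [abs_mul, abs_div, abs_pow, show (T - r) - T = -r by ring, abs_neg,
            abs_of_pos hr0, Nat.abs_cast]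
      _ ≤ C := this
  set q : ℝ := (T - t) / r with hq
  have hq0 : 0 ≤ q := div_nonneg (by linarith) hr0.le
  have hq1 : q < 1 := (div_lt_one hr0).mpr hrlt
  refine Summable.of_nonneg_of_le (fun n => abs_nonneg _) (fun n => ?_)
    ((summable_geometric_of_lt_one hq0 hq1).mul_left C)
  · 
    have key : |(t - T) ^ n / (Nat.factorial n : ℝ) * iteratedDeriv n fR T|
        = q ^ n * (r ^ n / (Nat.factorial n : ℝ) * |iteratedDeriv n fR T|) := by
      rw [abs_mul, abs_div, abs_pow, Nat.abs_cast,
        show |t - T| = T - t from by rw [abs_of_nonpos (by linarith)]; ring]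
      have : (T - t) ^ n = q ^ n * r ^ n := by
        rw [hq, div_pow, div_mul_cancel₀]
        positivity
      rw [this]; ring
    rw [key, mul_comm C (q ^ n)]
    exact mul_le_mul_of_nonneg_left (hCle n) (by positivity)
end

section
/- For every real number Δ > 0 there exists a constant α > 0 (depending only on Δ) such that for every integer L ≥ 1, ∑_{i=0}^{L} (binomial(L, i))^4 · (i! / (L!)²) · Δ^{2L − i} ≤ α^L / L^L. -/
/-- For every `Δ > 0` there is a constant `α > 0` such that for every `L ≥ 1`,
`∑_{i=0}^{L} (L choose i)⁴ (i! / (L!)²) Δ^{2L-i} ≤ α^L / L^L`. -/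
theorem bte_remainder_bound (Δ : ℝ) (hΔ : 0 < Δ) :
    ∃ α : ℝ, 0 < α ∧ ∀ L : ℕ, 1 ≤ L →
      ∑ i ∈ Finset.range (L + 1),
          (Nat.choose L i : ℝ) ^ 4 * ((Nat.factorial i : ℝ) / (Nat.factorial L : ℝ) ^ 2) *
            Δ ^ (2 * L - i)
        ≤ α ^ L / (L : ℝ) ^ L := by
  refine ⟨32 * Real.exp 1 * (Δ + 1) ^ 2, by positivity, fun L hL => ?_⟩
  have hLpos : (0:ℝ) < L := by exact_mod_cast hL
  have hfacpos : (0:ℝ) < (Nat.factorial L : ℝ) := by exact_mod_cast (Nat.factorial_pos L)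
  have hD1 : (1:ℝ) ≤ Δ + 1 := by linarith
  have hterm : ∀ i ∈ Finset.range (L + 1),
      (Nat.choose L i : ℝ) ^ 4 * ((Nat.factorial i : ℝ) / (Nat.factorial L : ℝ) ^ 2) *
        Δ ^ (2 * L - i)
      ≤ (16:ℝ) ^ L * ((Δ + 1) ^ 2) ^ L / (Nat.factorial L : ℝ) := by
    intro i hi
    have hi' : i ≤ L := Nat.lt_succ_iff.mp (Finset.mem_range.mp hi)
    have hchooseN : Nat.choose L i ≤ 2 ^ L := by
      calc Nat.choose L i ≤ ∑ m ∈ Finset.range (L + 1), Nat.choose L m :=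
            Finset.single_le_sum (fun m _ => Nat.zero_le _) hi
        _ = 2 ^ L := Nat.sum_range_choose L
    have hchoose : (Nat.choose L i : ℝ) ≤ 2 ^ L := by exact_mod_cast hchooseN
    have hchoose4 : (Nat.choose L i : ℝ) ^ 4 ≤ ((2:ℝ) ^ L) ^ 4 :=
      pow_le_pow_left₀ (by positivity) hchoose 4
    have hfacle : (Nat.factorial i : ℝ) ≤ (Nat.factorial L : ℝ) := by
      exact_mod_cast Nat.factorial_le hi'
    have hmid : (Nat.factorial i : ℝ) / (Nat.factorial L : ℝ) ^ 2
        ≤ 1 / (Nat.factorial L : ℝ) := by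
      rw [div_le_div_iff₀ (by positivity) hfacpos]
      nlinarith [hfacpos]
    have hDelta : Δ ^ (2 * L - i) ≤ (Δ + 1) ^ (2 * L) := by
      calc Δ ^ (2 * L - i) ≤ (Δ + 1) ^ (2 * L - i) :=
            pow_le_pow_left₀ hΔ.le (by linarith) _
        _ ≤ (Δ + 1) ^ (2 * L) := pow_le_pow_right₀ hD1 (Nat.sub_le _ _)
    calc (Nat.choose L i : ℝ) ^ 4 * ((Nat.factorial i : ℝ) / (Nat.factorial L : ℝ) ^ 2) *
          Δ ^ (2 * L - i)
        ≤ ((2:ℝ) ^ L) ^ 4 * (1 / (Nat.factorial L : ℝ)) * (Δ + 1) ^ (2 * L) := by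
          apply mul_le_mul (mul_le_mul hchoose4 hmid (by positivity) (by positivity))
            hDelta (by positivity) (by positivity)
      _ = (16:ℝ) ^ L * ((Δ + 1) ^ 2) ^ L / (Nat.factorial L : ℝ) := by
          have h16 : ((2:ℝ) ^ L) ^ 4 = 16 ^ L := by
            rw [← pow_mul, mul_comm, pow_mul]; norm_num
          have h2 : (Δ + 1) ^ (2 * L) = ((Δ + 1) ^ 2) ^ L := by rw [pow_mul]
          rw [h16, h2]; ring
  have hsum := Finset.sum_le_sum hterm
  have hcard : ∑ _i ∈ Finset.range (L + 1),
      ((16:ℝ) ^ L * ((Δ + 1) ^ 2) ^ L / (Nat.factorial L : ℝ))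
      = (L + 1 : ℝ) * ((16:ℝ) ^ L * ((Δ + 1) ^ 2) ^ L / (Nat.factorial L : ℝ)) := by
    rw [Finset.sum_const, Finset.card_range]; push_cast; ring
  have hL1 : (L + 1 : ℝ) ≤ 2 ^ L := by
    exact_mod_cast Nat.succ_le_of_lt (Nat.lt_two_pow_self (n := L))
  have hexp : (L:ℝ) ^ L / (Nat.factorial L : ℝ) ≤ Real.exp L :=
    Real.pow_div_factorial_le_exp (x := (L:ℝ)) hLpos.le L
  have hfacge : (L:ℝ) ^ L / Real.exp L ≤ (Nat.factorial L : ℝ) := by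
    rw [div_le_iff₀ (Real.exp_pos _)]
    rw [div_le_iff₀ hfacpos] at hexp
    linarith [hexp]
  have hexpL : Real.exp (L:ℝ) = (Real.exp 1) ^ L := by
    rw [← Real.exp_nat_mul]; norm_num
  calc ∑ i ∈ Finset.range (L + 1),
        (Nat.choose L i : ℝ) ^ 4 * ((Nat.factorial i : ℝ) / (Nat.factorial L : ℝ) ^ 2) *
          Δ ^ (2 * L - i)
      ≤ (L + 1 : ℝ) * ((16:ℝ) ^ L * ((Δ + 1) ^ 2) ^ L / (Nat.factorial L : ℝ)) := by
        rw [← hcard]; exact hsum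
    _ ≤ (2:ℝ) ^ L * ((16:ℝ) ^ L * ((Δ + 1) ^ 2) ^ L / (Nat.factorial L : ℝ)) := by
        apply mul_le_mul_of_nonneg_right hL1 (by positivity)
    _ = ((32:ℝ) * (Δ + 1) ^ 2) ^ L / (Nat.factorial L : ℝ) := by
        rw [mul_pow]
        have h32 : (32:ℝ) ^ L = 2 ^ L * 16 ^ L := by rw [← mul_pow]; norm_num
        rw [h32]; ring
    _ ≤ ((32:ℝ) * (Δ + 1) ^ 2) ^ L / ((L:ℝ) ^ L / Real.exp L) := by
        apply div_le_div_of_nonneg_left (by positivity) (by positivity) hfacge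
    _ = (32 * Real.exp 1 * (Δ + 1) ^ 2) ^ L / (L:ℝ) ^ L := by
        rw [div_div_eq_mul_div, hexpL, ← mul_pow]
        congr 2
        ring
end

section
/- For all real numbers c > 0 and Δ > 0, the sequence a_L := ∑_{i=0}^{L} c^{2(2L − i)} · (binomial(L, i))^4 · (i! / (L!)²) · Δ^{2L − i} tends to 0 as L → ∞. (This shows the summability condition of the backward Taylor expansion theorem holds whenever the L²-norms of the iterated Malliavin derivatives of order L are bounded by c^L.) -/
lemma choose_le_two_pow' (L i : ℕ) : (Nat.choose L i) ≤ 2 ^ L := by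
  rcases le_or_gt i L with h | h
  · calc Nat.choose L i ≤ ∑ j ∈ Finset.range (L + 1), Nat.choose L j :=
        Finset.single_le_sum (fun j _ => Nat.zero_le _) (Finset.mem_range.2 (Nat.lt_succ_of_le h))
    _ = 2 ^ L := Nat.sum_range_choose L
  · simp [Nat.choose_eq_zero_of_lt h]

/-- For all `c > 0` and `Δ > 0`, the sequence
`a_L = ∑_{i=0}^{L} c^{2(2L-i)} (L choose i)⁴ (i!/(L!)²) Δ^{2L-i}` tends to `0` as `L → ∞`. -/
theorem bte_remainder_tendsto_zero (c Δ : ℝ) (hc : 0 < c) (hΔ : 0 < Δ) :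
    Filter.Tendsto
      (fun L : ℕ => ∑ i ∈ Finset.range (L + 1),
        c ^ (2 * (2 * L - i)) * (Nat.choose L i : ℝ) ^ 4 *
          ((Nat.factorial i : ℝ) / (Nat.factorial L : ℝ) ^ 2) * Δ ^ (2 * L - i))
      Filter.atTop (nhds 0) := by
  set t : ℝ := c ^ 2 * Δ with ht
  have ht0 : 0 ≤ t := by positivity
  set K : ℝ := max t 1 with hKdef
  have hK1 : (1 : ℝ) ≤ K := le_max_right _ _
  have hK0 : (0 : ℝ) ≤ K := le_trans zero_le_one hK1
  have htK : t ≤ K := le_max_left _ _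
  apply squeeze_zero (g := fun L : ℕ => (32 * K ^ 2) ^ L / (Nat.factorial L : ℝ))
  · intro L
    apply Finset.sum_nonneg
    intro i _
    positivity
  · intro L
    have hLfac : (0 : ℝ) < (Nat.factorial L : ℝ) := by
      exact_mod_cast Nat.factorial_pos L
    have hterm : ∀ i ∈ Finset.range (L + 1),
        c ^ (2 * (2 * L - i)) * (Nat.choose L i : ℝ) ^ 4 *
          ((Nat.factorial i : ℝ) / (Nat.factorial L : ℝ) ^ 2) * Δ ^ (2 * L - i)
        ≤ (16 * K ^ 2) ^ L / (Nat.factorial L : ℝ) := by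
      intro i hi
      have hiL : i ≤ L := Nat.lt_succ_iff.mp (Finset.mem_range.mp hi)
      have heq : c ^ (2 * (2 * L - i)) * (Nat.choose L i : ℝ) ^ 4 *
          ((Nat.factorial i : ℝ) / (Nat.factorial L : ℝ) ^ 2) * Δ ^ (2 * L - i)
          = t ^ (2 * L - i) * ((Nat.choose L i : ℝ) ^ 4 *
            ((Nat.factorial i : ℝ) / (Nat.factorial L : ℝ) ^ 2)) := by
        rw [ht, mul_pow, pow_mul]
        ring
      rw [heq]
      have h1 : t ^ (2 * L - i) ≤ (K ^ 2) ^ L := by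
        calc t ^ (2 * L - i) ≤ K ^ (2 * L - i) :=
            pow_le_pow_left₀ ht0 htK _
          _ ≤ K ^ (2 * L) := pow_le_pow_right₀ hK1 (Nat.sub_le _ _)
          _ = (K ^ 2) ^ L := by rw [← pow_mul]
      have h2 : (Nat.choose L i : ℝ) ^ 4 ≤ (16 : ℝ) ^ L := by
        have : (Nat.choose L i : ℝ) ≤ (2 : ℝ) ^ L := by
          exact_mod_cast choose_le_two_pow' L i
        calc (Nat.choose L i : ℝ) ^ 4 ≤ ((2 : ℝ) ^ L) ^ 4 :=
            pow_le_pow_left₀ (by positivity) this 4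
          _ = (16 : ℝ) ^ L := by
            rw [← pow_mul, mul_comm, pow_mul]; norm_num
      have h3 : (Nat.factorial i : ℝ) / (Nat.factorial L : ℝ) ^ 2
          ≤ 1 / (Nat.factorial L : ℝ) := by
        rw [div_le_div_iff₀ (by positivity) hLfac]
        have : (Nat.factorial i : ℝ) ≤ (Nat.factorial L : ℝ) := by
          exact_mod_cast Nat.factorial_le hiL
        calc (Nat.factorial i : ℝ) * (Nat.factorial L : ℝ)
            ≤ (Nat.factorial L : ℝ) * (Nat.factorial L : ℝ) :=
              mul_le_mul_of_nonneg_right this hLfac.le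
          _ = 1 * (Nat.factorial L : ℝ) ^ 2 := by ring
      calc t ^ (2 * L - i) * ((Nat.choose L i : ℝ) ^ 4 *
            ((Nat.factorial i : ℝ) / (Nat.factorial L : ℝ) ^ 2))
          ≤ (K ^ 2) ^ L * ((16 : ℝ) ^ L * (1 / (Nat.factorial L : ℝ))) := by
            apply mul_le_mul h1 _ _ (by positivity)
            · exact mul_le_mul h2 h3 (by positivity) (by positivity)
            · positivity
        _ = (16 * K ^ 2) ^ L / (Nat.factorial L : ℝ) := by
            rw [mul_pow]; ring
    calc (∑ i ∈ Finset.range (L + 1),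
          c ^ (2 * (2 * L - i)) * (Nat.choose L i : ℝ) ^ 4 *
            ((Nat.factorial i : ℝ) / (Nat.factorial L : ℝ) ^ 2) * Δ ^ (2 * L - i))
        ≤ ∑ _i ∈ Finset.range (L + 1), (16 * K ^ 2) ^ L / (Nat.factorial L : ℝ) :=
          Finset.sum_le_sum hterm
      _ = (L + 1 : ℝ) * ((16 * K ^ 2) ^ L / (Nat.factorial L : ℝ)) := by
          rw [Finset.sum_const, Finset.card_range]
          push_cast
          ring
      _ ≤ (2 : ℝ) ^ L * ((16 * K ^ 2) ^ L / (Nat.factorial L : ℝ)) := by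
          apply mul_le_mul_of_nonneg_right _ (by positivity)
          exact_mod_cast Nat.succ_le_of_lt (Nat.lt_two_pow_self (n := L))
      _ = (32 * K ^ 2) ^ L / (Nat.factorial L : ℝ) := by
          rw [mul_pow, mul_pow, show (32 : ℝ) ^ L = 2 ^ L * 16 ^ L from by
            rw [← mul_pow]; norm_num]
          ring
  · exact FloorSemiring.tendsto_pow_div_factorial_atTop _
end

section
/- Let M ∈ ℝ, σ > 0, and let n be a natural number. Define F : ℝ → ℝ by F(x) = exp(−e^{M − σx}). Then the iterated derivative of order 2n of F satisfies, for all x ∈ ℝ: F^{(2n)}(x) = F(x) · σ^{2n} · ∑_{i=0}^{2n} (−1)^i · S(2n, i) · e^{i(M − σx)}, where S(m, i) are the Stirling numbers of the second kind. -/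
/-- Stirling numbers of the second kind: `stirling2 m i` is the number of partitions of an
`m`-element set into `i` nonempty blocks. They satisfy `S(0,0) = 1`, `S(m,0) = 0` for `m > 0`,
and `S(m+1, i) = i S(m, i) + S(m, i-1)`. -/
def stirling2 : ℕ → ℕ → ℕ
  | 0, 0 => 1
  | 0, _ + 1 => 0
  | _ + 1, 0 => 0
  | m + 1, i + 1 => (i + 1) * stirling2 m (i + 1) + stirling2 m i

lemma stirling2_eq_zero : ∀ m i : ℕ, m < i → stirling2 m i = 0 := by
  intro m
  induction m with
  | zero =>
    intro i hi
    cases i with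
    | zero => omega
    | succ j => rfl
  | succ m ih =>
    intro i hi
    cases i with
    | zero => omega
    | succ j =>
      have h1 : stirling2 m (j + 1) = 0 := ih _ (by omega)
      have h2 : stirling2 m j = 0 := ih _ (by omega)
      simp [stirling2, h1, h2]

lemma sum_id (m : ℕ) (u : ℝ) :
    Real.exp u * (∑ i ∈ Finset.range (m + 1),
        (-1 : ℝ) ^ i * (stirling2 m i : ℝ) * Real.exp (i * u))
      - ∑ i ∈ Finset.range (m + 1),
        (-1 : ℝ) ^ i * (stirling2 m i : ℝ) * Real.exp (i * u) * i
    = -∑ j ∈ Finset.range (m + 1 + 1),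
        (-1 : ℝ) ^ j * (stirling2 (m + 1) j : ℝ) * Real.exp (j * u) := by
  rw [Finset.mul_sum]
  rw [Finset.sum_range_succ'
    (fun j => (-1 : ℝ) ^ j * (stirling2 (m + 1) j : ℝ) * Real.exp (j * u)) (m + 1)]
  rw [Finset.sum_range_succ'
    (fun i => (-1 : ℝ) ^ i * (stirling2 m i : ℝ) * Real.exp (i * u) * i) m]
  have hext : (∑ i ∈ Finset.range m,
      (-1 : ℝ) ^ (i + 1) * (stirling2 m (i + 1) : ℝ) * Real.exp ((i + 1 : ℕ) * u) * (i + 1 : ℕ))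
      = ∑ i ∈ Finset.range (m + 1),
      (-1 : ℝ) ^ (i + 1) * (stirling2 m (i + 1) : ℝ) * Real.exp ((i + 1 : ℕ) * u) * (i + 1 : ℕ) := by
    rw [Finset.sum_range_succ, stirling2_eq_zero m (m + 1) (by omega)]
    simp
  have h0 : ((-1 : ℝ) ^ 0 * (stirling2 m 0 : ℝ) * Real.exp ((0 : ℕ) * u) * (0 : ℕ)) = 0 := by
    simp
  have h0' : ((-1 : ℝ) ^ 0 * (stirling2 (m + 1) 0 : ℝ) * Real.exp ((0 : ℕ) * u)) = 0 := by
    simp [stirling2]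
  simp only [h0, h0', add_zero] at *
  rw [hext, ← Finset.sum_neg_distrib, ← Finset.sum_sub_distrib]
  apply Finset.sum_congr rfl
  intro i _
  have hexp : Real.exp (((i : ℝ) + 1) * u) = Real.exp u * Real.exp ((i : ℝ) * u) := by
    rw [← Real.exp_add]; congr 1; ring
  push_cast [stirling2]
  rw [hexp]
  ring

lemma key_iteratedDeriv (M σ : ℝ) (m : ℕ) (x : ℝ) :
    iteratedDeriv m (fun y => Real.exp (-Real.exp (M - σ * y))) x
      = (-1 : ℝ) ^ m * Real.exp (-Real.exp (M - σ * x)) * σ ^ m *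
          ∑ i ∈ Finset.range (m + 1),
            (-1 : ℝ) ^ i * (stirling2 m i : ℝ) * Real.exp (i * (M - σ * x)) := by
  induction m generalizing x with
  | zero => simp [stirling2]
  | succ m ih =>
    rw [iteratedDeriv_succ]
    have hfun : iteratedDeriv m (fun y => Real.exp (-Real.exp (M - σ * y)))
        = fun y => ((-1 : ℝ) ^ m * σ ^ m) * (Real.exp (-Real.exp (M - σ * y)) *
            ∑ i ∈ Finset.range (m + 1),
              (-1 : ℝ) ^ i * (stirling2 m i : ℝ) * Real.exp (i * (M - σ * y))) := by
      funext y; rw [ih y]; ring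
    rw [hfun]
    have h1 : HasDerivAt (fun y : ℝ => M - σ * y) (-σ) x := by
      simpa using ((hasDerivAt_id x).const_mul σ).const_sub M
    have hF : HasDerivAt (fun y => Real.exp (-Real.exp (M - σ * y)))
        (Real.exp (-Real.exp (M - σ * x)) * (σ * Real.exp (M - σ * x))) x := by
      have := (h1.exp.fun_neg).exp
      convert this using 1
      ring
    have hS : HasDerivAt (fun y => ∑ i ∈ Finset.range (m + 1),
          (-1 : ℝ) ^ i * (stirling2 m i : ℝ) * Real.exp (i * (M - σ * y)))
        (∑ i ∈ Finset.range (m + 1),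
          (-1 : ℝ) ^ i * (stirling2 m i : ℝ) *
            (Real.exp (i * (M - σ * x)) * ((i : ℝ) * -σ))) x := by
      apply HasDerivAt.fun_sum
      intro i _
      have hi : HasDerivAt (fun y : ℝ => (i : ℝ) * (M - σ * y)) ((i : ℝ) * -σ) x :=
        h1.const_mul _
      exact (hi.exp).const_mul _
    rw [((hF.fun_mul hS).const_mul ((-1 : ℝ) ^ m * σ ^ m)).deriv]
    have hQ : (∑ i ∈ Finset.range (m + 1),
          (-1 : ℝ) ^ i * (stirling2 m i : ℝ) *
            (Real.exp (i * (M - σ * x)) * ((i : ℝ) * -σ)))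
        = -σ * ∑ i ∈ Finset.range (m + 1),
            (-1 : ℝ) ^ i * (stirling2 m i : ℝ) * Real.exp (i * (M - σ * x)) * i := by
      rw [Finset.mul_sum]
      exact Finset.sum_congr rfl fun i _ => by ring
    rw [hQ]
    have hid := sum_id m (M - σ * x)
    linear_combination ((-1 : ℝ) ^ m * σ ^ (m + 1) * Real.exp (-Real.exp (M - σ * x))) * hid

/-- For `F(x) = exp(-e^{M - σx})`, the `2n`-th derivative is
`F(x) σ^{2n} ∑_{i=0}^{2n} (-1)^i S(2n, i) e^{i(M - σx)}`, where `S` are the Stirling numbers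
of the second kind. -/
theorem iteratedDeriv_exp_neg_exp (M σ : ℝ) (hσ : 0 < σ) (n : ℕ) (x : ℝ) :
    iteratedDeriv (2 * n) (fun y => Real.exp (-Real.exp (M - σ * y))) x
      = Real.exp (-Real.exp (M - σ * x)) * σ ^ (2 * n) *
          ∑ i ∈ Finset.range (2 * n + 1),
            (-1 : ℝ) ^ i * (stirling2 (2 * n) i : ℝ) * Real.exp (i * (M - σ * x)) := by
  rw [key_iteratedDeriv M σ (2 * n) x, pow_mul]
  norm_num
end
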